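/- arXiv:2305.09133 — 2 statements merged into one kernel-verified Lean document; each statement's English description precedes it below -/
import Mathlib

section
/- Let (G,μ) be an ε-coherent massed graph that is not (δ,r+1)-focused, and suppose εr·δ = ε and ε ≤ δ/2. Then there exists Z ⊆ V(G) with μ(Z) ≥ δ such that the massed graph (G[Z], μ') with μ'(X)=μ(X)/μ(Z) is (εr, r)-coherent. -/
open SimpleGraph

/-- Sets `A`, `B` are complete to each other: disjoint with all edges between them. -/
def Complete {V : Type} (G : SimpleGraph V) (A B : Set V) : Prop :=
  Disjoint A B ∧ ∀ a ∈ A, ∀ b ∈ B, G.Adj a b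

/-- Sets `A`, `B` are anticomplete: disjoint with no edges between them. -/
def Anticomplete {V : Type} (G : SimpleGraph V) (A B : Set V) : Prop :=
  Disjoint A B ∧ ∀ a ∈ A, ∀ b ∈ B, ¬ G.Adj a b

/-- `V1 = N(u) \ N[v]`. -/
def sideA {V : Type} (G : SimpleGraph V) (u v : V) : Set V :=
  G.neighborSet u \ insert v (G.neighborSet v)

/-- `V2 = N(v) \ N[u]`. -/
def sideB {V : Type} (G : SimpleGraph V) (u v : V) : Set V :=
  G.neighborSet v \ insert u (G.neighborSet u)

/-- `V3 = N(u) ∩ N(v)`. -/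
def sideC {V : Type} (G : SimpleGraph V) (u v : V) : Set V :=
  G.neighborSet u ∩ G.neighborSet v

/-- The pair `{a, b}` crosses one of the three pairs of sets `(V1,V2)`, `(V2,V3)`, `(V1,V3)`. -/
def pivotCross {V : Type} (G : SimpleGraph V) (u v a b : V) : Prop :=
  (a ∈ sideA G u v ∧ b ∈ sideB G u v) ∨ (a ∈ sideB G u v ∧ b ∈ sideA G u v) ∨
  (a ∈ sideB G u v ∧ b ∈ sideC G u v) ∨ (a ∈ sideC G u v ∧ b ∈ sideB G u v) ∨
  (a ∈ sideA G u v ∧ b ∈ sideC G u v) ∨ (a ∈ sideC G u v ∧ b ∈ sideA G u v)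

lemma pivotCross_comm {V : Type} {G : SimpleGraph V} {u v a b : V} :
    pivotCross G u v a b ↔ pivotCross G u v b a := by
  unfold pivotCross; tauto

/-- The pivot `G ∧ uv`: complement the edges between each of the pairs `(V1,V2)`, `(V2,V3)`,
`(V1,V3)` and then swap the labels of `u` and `v`. -/
def pivotGraph {V : Type} (G : SimpleGraph V) (u v : V) : SimpleGraph V :=
  letI := Classical.decEq V
  { Adj := fun x y => x ≠ y ∧
      Xor' (G.Adj (Equiv.swap u v x) (Equiv.swap u v y))
        (pivotCross G u v (Equiv.swap u v x) (Equiv.swap u v y)),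
    symm := ⟨by
      rintro x y ⟨hxy, h⟩
      refine ⟨hxy.symm, ?_⟩
      have h1 : G.Adj (Equiv.swap u v x) (Equiv.swap u v y) ↔
          G.Adj (Equiv.swap u v y) (Equiv.swap u v x) := G.adj_comm _ _
      have h2 : pivotCross G u v (Equiv.swap u v x) (Equiv.swap u v y) ↔
          pivotCross G u v (Equiv.swap u v y) (Equiv.swap u v x) := pivotCross_comm
      unfold Xor' at h ⊢
      rw [h1, h2] at h
      exact h⟩,
    loopless := ⟨fun _ h => h.1 rfl⟩ }

/-- `H` is a pivot-minor of `G`: `H` is obtainable from `G` (up to isomorphism) by a sequence of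
vertex deletions and pivots of edges. -/
inductive IsPivotMinor : ∀ {W U : Type}, SimpleGraph W → SimpleGraph U → Prop
  | of_iso {W U : Type} {H : SimpleGraph W} {G : SimpleGraph U} :
      Nonempty (H ≃g G) → IsPivotMinor H G
  | pivot {W U : Type} {H : SimpleGraph W} {G : SimpleGraph U} (u v : U) :
      G.Adj u v → IsPivotMinor H (pivotGraph G u v) → IsPivotMinor H G
  | delete {W U : Type} {H : SimpleGraph W} {G : SimpleGraph U} (s : Set U) :
      IsPivotMinor H (G.induce s) → IsPivotMinor H G

/-- `G` is obtained from `H` by replacing each edge `uv` of `H` with a path whose length satisfies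
`P u v h`: there are internally disjoint induced paths of `G` joining the images of the branch
vertices, covering all of `G`, whose edges are exactly the edges of `G`. -/
def IsEdgeReplacement {U W : Type} (H : SimpleGraph U)
    (P : ∀ u v : U, H.Adj u v → ℕ → Prop) (G : SimpleGraph W) : Prop :=
  ∃ (x : U ↪ W) (p : ∀ u v : U, H.Adj u v → G.Walk (x u) (x v)),
    (∀ u v h, (p u v h).IsPath) ∧
    (∀ u v h, P u v h (p u v h).length) ∧
    (∀ u v h, p v u h.symm = (p u v h).reverse) ∧
    (∀ u v h w, w ∈ (p u v h).support → w ∈ Set.range x → w = x u ∨ w = x v) ∧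
    (∀ u v h k l h', s(u, v) ≠ s(k, l) →
      ∀ w, w ∈ (p u v h).support → w ∈ (p k l h').support → w ∈ Set.range x) ∧
    (∀ w : W, w ∈ Set.range x ∨ ∃ u v h, w ∈ (p u v h).support) ∧
    (∀ a b : W, G.Adj a b ↔ ∃ u v h, (p u v h).toSubgraph.Adj a b)

/-- `G` is obtained from `H` by replacing each edge with a path whose length satisfies `P`. -/
def IsSubdivisionWith {U W : Type} (H : SimpleGraph U) (P : ℕ → Prop) (G : SimpleGraph W) : Prop :=
  IsEdgeReplacement H (fun _ _ _ n => P n) G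

/-- An `F`-filleting of `G`: subdivide (at least once) every edge of `G` not in `F`, and do not
subdivide the edges of `F`. -/
def IsFilleting {U W : Type} (G F : SimpleGraph U) (H : SimpleGraph W) : Prop :=
  IsEdgeReplacement G (fun u v _ n => (F.Adj u v ∧ n = 1) ∨ (¬ F.Adj u v ∧ 2 ≤ n)) H

/-- Join of `H` with a single new vertex (`H + K_1`), the new vertex being `none`. -/
def addApex {W : Type} (H : SimpleGraph W) : SimpleGraph (Option W) :=
  SimpleGraph.fromRel fun a b =>
    a = none ∨ ∃ u v : W, a = some u ∧ b = some v ∧ H.Adj u v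

/-- `F` with ends `a`, `b` is a fuzzy odd path (with length satisfying `P`): it consists of an odd
path from `a` to `b` through all the vertices, possibly together with one extra edge `xy` between
two internal vertices such that `xy` lies in a triangle. -/
def IsFuzzyOddPath {T : Type} (F : SimpleGraph T) (a b : T) (P : ℕ → Prop) : Prop :=
  ∃ p : F.Walk a b, p.IsPath ∧ Odd p.length ∧ P p.length ∧ (∀ t : T, t ∈ p.support) ∧
    ((∀ c d : T, F.Adj c d ↔ p.toSubgraph.Adj c d) ∨
      ∃ x y : T, x ∈ p.support ∧ y ∈ p.support ∧ x ≠ a ∧ x ≠ b ∧ y ≠ a ∧ y ≠ b ∧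
        F.Adj x y ∧ ¬ p.toSubgraph.Adj x y ∧ (∃ z : T, F.Adj x z ∧ F.Adj y z) ∧
        (∀ c d : T, F.Adj c d ↔ (p.toSubgraph.Adj c d ∨ (c = x ∧ d = y) ∨ (c = y ∧ d = x))))

/-- `G` is a proper fuzzy odd subdivision of `H`: `G` is obtained from `H` by replacing each edge
with a fuzzy odd path of (odd) length at least `3`. -/
def IsProperFuzzyOddSubdivision {U W : Type} (H : SimpleGraph U) (G : SimpleGraph W) : Prop :=
  ∃ (x : U ↪ W) (S : ∀ u v : U, H.Adj u v → Set W)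
    (hS : ∀ u v h, x u ∈ S u v h ∧ x v ∈ S u v h),
    (∀ u v h, S v u h.symm = S u v h) ∧
    (∀ u v h w, w ∈ S u v h → w ∈ Set.range x → w = x u ∨ w = x v) ∧
    (∀ u v h k l h', s(u, v) ≠ s(k, l) → ∀ w, w ∈ S u v h → w ∈ S k l h' → w ∈ Set.range x) ∧
    (∀ w : W, w ∈ Set.range x ∨ ∃ u v h, w ∈ S u v h) ∧
    (∀ a b : W, G.Adj a b → ∃ u v h, a ∈ S u v h ∧ b ∈ S u v h) ∧
    (∀ u v h, IsFuzzyOddPath (G.induce (S u v h))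
      ⟨x u, (hS u v h).1⟩ ⟨x v, (hS u v h).2⟩ (fun n => 3 ≤ n))

/-- A mass on a graph `G`. -/
structure IsMass {V : Type} (G : SimpleGraph V) (μ : Set V → ℝ) : Prop where
  map_empty : μ ∅ = 0
  map_univ : μ Set.univ = 1
  mono : ∀ ⦃X Y : Set V⦄, X ⊆ Y → μ X ≤ μ Y
  subadditive : ∀ X Y : Set V, μ (X ∪ Y) ≤ μ X + μ Y

/-- `N^r[v]`: the ball of radius `r` about `v`. -/
def ball {V : Type} (G : SimpleGraph V) (v : V) (r : ℕ) : Set V :=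
  {w | ∃ p : G.Walk v w, p.length ≤ r}

/-- `(G, μ)` is `ε`-coherent. -/
def EpsCoherent {V : Type} (G : SimpleGraph V) (μ : Set V → ℝ) (ε : ℝ) : Prop :=
  (∀ v : V, μ {v} < ε) ∧ (∀ v : V, μ (G.neighborSet v) < ε) ∧
  ∀ A B : Set V, Anticomplete G A B → min (μ A) (μ B) < ε

/-- `(G, μ)` is `(ε, r)`-coherent. -/
def EpsRCoherent {V : Type} (G : SimpleGraph V) (μ : Set V → ℝ) (ε : ℝ) (r : ℕ) : Prop :=
  (∀ v : V, μ (_root_.ball G v r) < ε) ∧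
  ∀ A B : Set V, Anticomplete G A B → min (μ A) (μ B) < ε

/-- `(G, μ)` is `(δ, r)`-focused. -/
def Focused {V : Type} (G : SimpleGraph V) (μ : Set V → ℝ) (δ : ℝ) (r : ℕ) : Prop :=
  ∀ Z : Set V, δ ≤ μ Z → ∃ v : Z, μ Z / 2 ≤ μ (Subtype.val '' _root_.ball (G.induce Z) v r)

/-- `N[X]`. -/
def closedNbhd {V : Type} (G : SimpleGraph V) (X : Set V) : Set V :=
  X ∪ {w | ∃ a ∈ X, G.Adj a w}

/-- `x` is an `r`-centre of `X`: every vertex of `X` is within distance `r` of `x` in `G[X]`. -/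
def IsCentre {V : Type} (G : SimpleGraph V) (X : Set V) (x : V) (hx : x ∈ X) (r : ℕ) : Prop :=
  ∀ y : X, ∃ p : (G.induce X).Walk ⟨x, hx⟩ y, p.length ≤ r

/-- A leaf: a vertex of degree at most 1. -/
def IsLeaf {V : Type} (G : SimpleGraph V) (v : V) : Prop := (G.neighborSet v).Subsingleton

/-- `P` is a path graph. -/
def IsPathGraph {U : Type} (P : SimpleGraph U) : Prop :=
  ∃ (a b : U) (w : P.Walk a b), w.IsPath ∧ (∀ u : U, u ∈ w.support) ∧
    ∀ x y : U, P.Adj x y ↔ w.toSubgraph.Adj x y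

/-- A caterpillar: a tree `T` such that `T − L(T)` is a path. -/
def IsCaterpillar {U : Type} (T : SimpleGraph U) : Prop :=
  T.IsTree ∧ IsPathGraph (T.induce {v | ¬ IsLeaf T v})

/-- Disjoint union of `q` stars, each with `p` leaves: `(i, none)` is the centre of the `i`-th
star and `(i, some j)` its leaves. -/
def starForest (q p : ℕ) : SimpleGraph (Fin q × Option (Fin p)) :=
  SimpleGraph.fromRel fun a b => a.1 = b.1 ∧ a.2 = none ∧ b.2 ≠ none

/-- The clique number `ω(G)`. -/
noncomputable def cliqueNumber {V : Type} [Fintype V] (G : SimpleGraph V) : ℕ :=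
  sSup {n | ∃ s : Finset V, G.IsNClique n s}

/-- The independence number `α(G)`. -/
noncomputable def indepNumber {V : Type} [Fintype V] (G : SimpleGraph V) : ℕ :=
  cliqueNumber Gᶜ

/-- an `ε`-coherent massed graph that is not `(δ, r+1)`-focused (with
`εr·δ = ε ≤ δ/2`) has a set `Z` of mass at least `δ` whose normalized induced massed graph is
`(εr, r)`-coherent. -/
theorem unfocused_gives_rcoherent {V : Type} (G : SimpleGraph V) (μ : Set V → ℝ)
    (ε εr δ : ℝ) (r : ℕ) (hμ : IsMass G μ) (hco : EpsCoherent G μ ε)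
    (hnf : ¬ Focused G μ δ (r + 1))
    (heq : εr * δ = ε) (hle : ε ≤ δ / 2) (hδ : 0 < δ) (hεr : 0 < εr) :
    ∃ Z : Set V, δ ≤ μ Z ∧
      EpsRCoherent (G.induce Z) (fun X : Set Z => μ (Subtype.val '' X) / μ Z) εr r := by
  rw [Focused] at hnf
  push_neg at hnf
  obtain ⟨Z, hZ, hball⟩ := hnf
  have hμZ : 0 < μ Z := hδ.trans_le hZ
  have hεμZ : ε ≤ εr * μ Z := by
    calc ε = εr * δ := heq.symm
    _ ≤ εr * μ Z := by nlinarith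
  refine ⟨Z, hZ, ?_, ?_⟩
  · -- balls small
    intro v
    set B1 : Set V := Subtype.val '' _root_.ball (G.induce Z) v r with hB1def
    set B2 : Set V := Subtype.val '' _root_.ball (G.induce Z) v (r + 1) with hB2def
    have hsub : B1 ⊆ B2 := by
      apply Set.image_mono
      rintro w ⟨p, hp⟩
      exact ⟨p, hp.trans (Nat.le_succ r)⟩
    have hB2Z : B2 ⊆ Z := by
      rintro w ⟨⟨w', hw'⟩, _, rfl⟩; exact hw'
    set Y : Set V := Z \ B2 with hYdef
    have hanti : Anticomplete G B1 Y := by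
      constructor
      · exact Set.disjoint_left.mpr fun a ha hay => hay.2 (hsub ha)
      · rintro a ⟨⟨a', ha'⟩, ⟨p, hp⟩, rfl⟩ b ⟨hbZ, hbB2⟩ hadj
        exact hbB2 ⟨⟨b, hbZ⟩, ⟨p.concat (show (G.induce Z).Adj ⟨a', ha'⟩ ⟨b, hbZ⟩ from hadj), by
          rw [SimpleGraph.Walk.length_concat]; omega⟩, rfl⟩
    have hYbig : μ Z ≤ μ B2 + μ Y := by
      calc μ Z ≤ μ (B2 ∪ Y) := hμ.mono (fun w hw => by
            by_cases h : w ∈ B2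
            · exact Or.inl h
            · exact Or.inr ⟨hw, h⟩)
      _ ≤ μ B2 + μ Y := hμ.subadditive _ _
    have hB2small : μ B2 < μ Z / 2 := hball v
    have hYge : ε ≤ μ Y := by
      have : μ Z / 2 < μ Y := by linarith
      linarith
    have hmin := hco.2.2 B1 Y hanti
    have hB1 : μ B1 < ε := by
      rcases min_lt_iff.mp hmin with h | h
      · exact h
      · linarith
    rw [div_lt_iff₀ hμZ]
    calc μ B1 < ε := hB1
    _ ≤ εr * μ Z := hεμZ
  · -- anticomplete pairs
    rintro A B ⟨hdisj, hab⟩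
    have hanti : Anticomplete G (Subtype.val '' A) (Subtype.val '' B) := by
      constructor
      · exact (Set.disjoint_image_iff Subtype.val_injective).mpr hdisj
      · rintro a ⟨a', ha', rfl⟩ b ⟨b', hb', rfl⟩ hadj
        exact hab a' ha' b' hb' hadj
    have hmin := hco.2.2 _ _ hanti
    simp only [min_lt_iff, div_lt_iff₀ hμZ]
    rcases min_lt_iff.mp hmin with h | h
    · exact Or.inl (h.trans_le hεμZ)
    · exact Or.inr (h.trans_le hεμZ)
end

section
/- Let H be a graph obtained from K_r by replacing each edge with a path of length at least 4 congruent to 1 mod 3, let x1x2x3x4x5 be an induced path in H with x2,x3,x4 of degree 2 in H, and let H' = (H \ {x2,x3,x4}) ∪ {x1x5}. Let u be the apex vertex of \overline{H}+K_1. Then ((\overline{H} + K_1) ∧ ux3 ∧ x2x4) \ {x2,x3,x4} = \overline{H'} + K_1. -/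
open SimpleGraph

section Helpers
variable {V : Type}

lemma pivotGraph_adj (G : SimpleGraph V) (u v x y : V) :
    (pivotGraph G u v).Adj x y ↔
      letI := Classical.decEq V
      (x ≠ y ∧ Xor' (G.Adj (Equiv.swap u v x) (Equiv.swap u v y))
        (pivotCross G u v (Equiv.swap u v x) (Equiv.swap u v y))) := Iff.rfl

lemma addApex_adj_none_some (H : SimpleGraph V) (b : V) :
    (addApex H).Adj none (some b) := by
  simp [addApex, SimpleGraph.fromRel_adj]

lemma addApex_adj_some_some (H : SimpleGraph V) (a b : V) :
    (addApex H).Adj (some a) (some b) ↔ a ≠ b ∧ (H.Adj a b) := by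
  constructor
  · rintro ⟨hne, h | h⟩
    · obtain ⟨u, v, hu, hv, huv⟩ := h.resolve_left (by simp)
      simp_all
    · obtain ⟨u, v, hu, hv, huv⟩ := h.resolve_left (by simp)
      exact ⟨fun e => hne (by rw [e]), by simp_all [huv.symm]⟩
  · rintro ⟨hne, h⟩
    exact ⟨by simpa using hne, Or.inl (Or.inr ⟨a, b, rfl, rfl, h⟩)⟩

lemma xor_of_right {P Q : Prop} (hq : Q) : Xor' P Q ↔ ¬P := by unfold Xor' Xor; tauto

lemma xor_of_not_right {P Q : Prop} (hq : ¬Q) : Xor' P Q ↔ P := by unfold Xor' Xor; tauto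

lemma xor_pivot_final {P C : Prop} (h : C → ¬P) : Xor' (¬P) C ↔ ¬(P ∨ C) := by
  unfold Xor' Xor; tauto

end Helpers

/-- the pivot computation
`((complement(H) + K_1) ∧ u x3 ∧ x2 x4) − {x2, x3, x4} = complement(H') + K_1`, where
`H' = (H − {x2,x3,x4}) ∪ {x1x5}`. -/
theorem pivot_computation {V : Type} [Fintype V] (r : ℕ) (H : SimpleGraph V)
    (hH : IsSubdivisionWith (⊤ : SimpleGraph (Fin r)) (fun n => 4 ≤ n ∧ n % 3 = 1) H)
    (x1 x2 x3 x4 x5 : V) (hd : [x1, x2, x3, x4, x5].Nodup)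
    (h2 : H.neighborSet x2 = {x1, x3}) (h3 : H.neighborSet x3 = {x2, x4})
    (h4 : H.neighborSet x4 = {x3, x5}) (h15 : ¬ H.Adj x1 x5) :
    Nonempty
      (((pivotGraph (pivotGraph (addApex Hᶜ) none (some x3)) (some x2) (some x4)).induce
          {w : Option V | w ≠ some x2 ∧ w ≠ some x3 ∧ w ≠ some x4}) ≃g
        addApex ((SimpleGraph.fromRel
          (fun a b : {v : V // v ≠ x2 ∧ v ≠ x3 ∧ v ≠ x4} =>
            H.Adj a.1 b.1 ∨ (a.1 = x1 ∧ b.1 = x5)))ᶜ)) := by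
  classical
  simp only [List.nodup_cons, List.mem_cons, List.mem_singleton, List.not_mem_nil,
    not_or, or_false, List.nodup_nil, and_true] at hd
  obtain ⟨⟨d12, d13, d14, d15⟩, ⟨d23, d24, d25⟩, ⟨d34, d35⟩, d45, -⟩ := hd
  have hx2 : ∀ a, H.Adj x2 a ↔ a = x1 ∨ a = x3 := fun a => by
    rw [← SimpleGraph.mem_neighborSet, h2]; simp
  have hx3 : ∀ a, H.Adj x3 a ↔ a = x2 ∨ a = x4 := fun a => by
    rw [← SimpleGraph.mem_neighborSet, h3]; simp
  have hx4 : ∀ a, H.Adj x4 a ↔ a = x3 ∨ a = x5 := fun a => by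
    rw [← SimpleGraph.mem_neighborSet, h4]; simp
  set G0 := addApex Hᶜ with hG0def
  have a0ns : ∀ b : V, G0.Adj none (some b) := fun b => addApex_adj_none_some _ b
  have a0ss : ∀ a b : V, G0.Adj (some a) (some b) ↔ a ≠ b ∧ ¬ H.Adj a b := fun a b => by
    rw [hG0def, addApex_adj_some_some, SimpleGraph.compl_adj]; tauto
  -- sides of G0 w.r.t. (none, some x3)
  have sA0s : ∀ a : V, (some a ∈ sideA G0 none (some x3) ↔ a = x2 ∨ a = x4) := by
    intro a
    simp only [sideA, Set.mem_diff, Set.mem_insert_iff, SimpleGraph.mem_neighborSet,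
      a0ns, true_and, a0ss, Option.some.injEq, not_or, not_and, not_not]
    constructor
    · rintro ⟨h1, h2'⟩
      exact (hx3 a).1 (h2' (Ne.symm h1))
    · rintro (rfl | rfl)
      · exact ⟨d23, fun _ => (hx3 a).2 (Or.inl rfl)⟩
      · exact ⟨Ne.symm d34, fun _ => (hx3 a).2 (Or.inr rfl)⟩
  have sA0n : (none : Option V) ∉ sideA G0 none (some x3) := by
    intro hw
    exact G0.loopless.irrefl none hw.1
  have sB0 : ∀ w : Option V, w ∉ sideB G0 none (some x3) := by
    rintro (_ | a) hw
    · exact hw.2 (Set.mem_insert _ _)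
    · exact hw.2 (Set.mem_insert_iff.2 (Or.inr ((SimpleGraph.mem_neighborSet _ _ _).2 (a0ns a))))
  have sC0s : ∀ a : V, (some a ∈ sideC G0 none (some x3) ↔ a ≠ x3 ∧ ¬ H.Adj x3 a) := by
    intro a
    simp only [sideC, Set.mem_inter_iff, SimpleGraph.mem_neighborSet, a0ns, true_and, a0ss]
    tauto
  have sC0n : (none : Option V) ∉ sideC G0 none (some x3) := by
    intro hw
    exact G0.loopless.irrefl none hw.1
  have c0 : ∀ w z : Option V, pivotCross G0 none (some x3) w z ↔
      ((w ∈ sideA G0 none (some x3) ∧ z ∈ sideC G0 none (some x3)) ∨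
       (w ∈ sideC G0 none (some x3) ∧ z ∈ sideA G0 none (some x3))) := by
    intro w z
    have h1 := sB0 w
    have h2' := sB0 z
    unfold pivotCross
    tauto
  -- concrete cross0 facts
  have mC0 : ∀ a : V, a ≠ x2 → a ≠ x3 → a ≠ x4 → some a ∈ sideC G0 none (some x3) := by
    intro a ha2 ha3 ha4
    refine (sC0s a).2 ⟨ha3, fun h => ?_⟩
    rcases (hx3 a).1 h with rfl | rfl
    · exact ha2 rfl
    · exact ha4 rfl
  have c0_2a : ∀ a : V, a ≠ x2 → a ≠ x3 → a ≠ x4 →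
      pivotCross G0 none (some x3) (some x2) (some a) := by
    intro a ha2 ha3 ha4
    exact (c0 _ _).2 (Or.inl ⟨(sA0s x2).2 (Or.inl rfl), mC0 a ha2 ha3 ha4⟩)
  have c0_4a : ∀ a : V, a ≠ x2 → a ≠ x3 → a ≠ x4 →
      pivotCross G0 none (some x3) (some x4) (some a) := by
    intro a ha2 ha3 ha4
    exact (c0 _ _).2 (Or.inl ⟨(sA0s x4).2 (Or.inr rfl), mC0 a ha2 ha3 ha4⟩)
  have m3A : some x3 ∉ sideA G0 none (some x3) := by
    intro h
    rcases (sA0s x3).1 h with rfl | rfl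
    · exact d23 rfl
    · exact d34 rfl
  have m3C : some x3 ∉ sideC G0 none (some x3) := by
    intro h
    exact ((sC0s x3).1 h).1 rfl
  have c0_3w : ∀ w : Option V, ¬ pivotCross G0 none (some x3) (some x3) w := by
    intro w h
    rcases (c0 _ _).1 h with ⟨h1, -⟩ | ⟨h1, -⟩
    · exact m3A h1
    · exact m3C h1
  have c0_ss : ∀ a b : V, a ≠ x2 → a ≠ x4 → b ≠ x2 → b ≠ x4 →
      ¬ pivotCross G0 none (some x3) (some a) (some b) := by
    intro a b ha2 ha4 hb2 hb4 h
    rcases (c0 _ _).1 h with ⟨h1, -⟩ | ⟨-, h1⟩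
    · rcases (sA0s a).1 h1 with rfl | rfl
      · exact ha2 rfl
      · exact ha4 rfl
    · rcases (sA0s b).1 h1 with rfl | rfl
      · exact hb2 rfl
      · exact hb4 rfl
  -- G1 adjacency facts
  set G1 := pivotGraph G0 none (some x3) with hG1def
  have swap1 : ∀ a : V, a ≠ x3 →
      @Equiv.swap (Option V) (Classical.decEq (Option V)) none (some x3) (some a) = some a := by
    intro a ha
    exact @Equiv.swap_apply_of_ne_of_ne _ (Classical.decEq _) _ _ _ (by simp) (by simp [ha])
  have swap1n : @Equiv.swap (Option V) (Classical.decEq (Option V)) none (some x3) none = some x3 :=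
    @Equiv.swap_apply_left _ (Classical.decEq _) _ _
  have g2a : ∀ a : V, a ≠ x2 → a ≠ x3 → a ≠ x4 → (G1.Adj (some x2) (some a) ↔ a = x1) := by
    intro a ha2 ha3 ha4
    rw [hG1def, pivotGraph_adj]
    rw [swap1 _ d23, swap1 _ ha3, xor_of_right (c0_2a a ha2 ha3 ha4)]
    have hadj : G0.Adj (some x2) (some a) ↔ ¬ a = x1 := by
      rw [a0ss]
      constructor
      · rintro ⟨-, h⟩ rfl
        exact h ((hx2 a).2 (Or.inl rfl))
      · intro h
        refine ⟨Ne.symm ha2, fun h' => ?_⟩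
        rcases (hx2 a).1 h' with rfl | rfl
        · exact h rfl
        · exact ha3 rfl
    rw [hadj, not_not]
    constructor
    · exact fun h => h.2
    · rintro rfl
      exact ⟨by simp [Ne.symm d12], rfl⟩
  have g4a : ∀ a : V, a ≠ x2 → a ≠ x3 → a ≠ x4 → (G1.Adj (some x4) (some a) ↔ a = x5) := by
    intro a ha2 ha3 ha4
    rw [hG1def, pivotGraph_adj]
    rw [swap1 _ (Ne.symm d34), swap1 _ ha3, xor_of_right (c0_4a a ha2 ha3 ha4)]
    have hadj : G0.Adj (some x4) (some a) ↔ ¬ a = x5 := by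
      rw [a0ss]
      constructor
      · rintro ⟨-, h⟩ rfl
        exact h ((hx4 a).2 (Or.inr rfl))
      · intro h
        refine ⟨Ne.symm ha4, fun h' => ?_⟩
        rcases (hx4 a).1 h' with rfl | rfl
        · exact ha3 rfl
        · exact h rfl
    rw [hadj, not_not]
    constructor
    · exact fun h => h.2
    · rintro rfl
      exact ⟨by simp [d45], rfl⟩
  have g2n : ¬ G1.Adj (some x2) none := by
    rw [hG1def, pivotGraph_adj, swap1 _ d23, swap1n,
      xor_of_not_right (fun h => c0_3w _ (pivotCross_comm.1 h))]
    rintro ⟨-, h⟩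
    exact ((a0ss x2 x3).1 h).2 ((hx2 x3).2 (Or.inr rfl))
  have g4n : ¬ G1.Adj (some x4) none := by
    rw [hG1def, pivotGraph_adj, swap1 _ (Ne.symm d34), swap1n,
      xor_of_not_right (fun h => c0_3w _ (pivotCross_comm.1 h))]
    rintro ⟨-, h⟩
    exact ((a0ss x4 x3).1 h).2 ((hx4 x3).2 (Or.inl rfl))
  have g1ns : ∀ b : V, b ≠ x2 → b ≠ x3 → b ≠ x4 → G1.Adj none (some b) := by
    intro b hb2 hb3 hb4
    rw [hG1def, pivotGraph_adj, swap1n, swap1 _ hb3, xor_of_not_right (c0_3w _)]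
    exact ⟨by simp, (a0ss x3 b).2 ⟨Ne.symm hb3, fun h => by
      rcases (hx3 b).1 h with rfl | rfl
      · exact hb2 rfl
      · exact hb4 rfl⟩⟩
  have g1ss : ∀ a b : V, a ≠ x2 → a ≠ x3 → a ≠ x4 → b ≠ x2 → b ≠ x3 → b ≠ x4 →
      (G1.Adj (some a) (some b) ↔ a ≠ b ∧ ¬ H.Adj a b) := by
    intro a b ha2 ha3 ha4 hb2 hb3 hb4
    rw [hG1def, pivotGraph_adj, swap1 _ ha3, swap1 _ hb3,
      xor_of_not_right (c0_ss a b ha2 ha4 hb2 hb4), a0ss]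
    simp only [ne_eq, Option.some.injEq]
    tauto
  -- sides of G1 w.r.t. (some x2, some x4)
  have mA1s : ∀ a : V, a ≠ x2 → a ≠ x3 → a ≠ x4 →
      (some a ∈ sideA G1 (some x2) (some x4) ↔ a = x1) := by
    intro a ha2 ha3 ha4
    simp only [sideA, Set.mem_diff, Set.mem_insert_iff, SimpleGraph.mem_neighborSet,
      g2a a ha2 ha3 ha4, g4a a ha2 ha3 ha4, Option.some.injEq]
    constructor
    · exact fun h => h.1
    · rintro rfl
      exact ⟨rfl, by rintro (rfl | rfl); exacts [d14 rfl, d15 rfl]⟩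
  have mB1s : ∀ a : V, a ≠ x2 → a ≠ x3 → a ≠ x4 →
      (some a ∈ sideB G1 (some x2) (some x4) ↔ a = x5) := by
    intro a ha2 ha3 ha4
    simp only [sideB, Set.mem_diff, Set.mem_insert_iff, SimpleGraph.mem_neighborSet,
      g2a a ha2 ha3 ha4, g4a a ha2 ha3 ha4, Option.some.injEq]
    constructor
    · exact fun h => h.1
    · rintro rfl
      exact ⟨rfl, by rintro (rfl | rfl); exacts [d25 rfl, d15 rfl]⟩
  have mC1s : ∀ a : V, a ≠ x2 → a ≠ x3 → a ≠ x4 →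
      ¬ (some a ∈ sideC G1 (some x2) (some x4)) := by
    intro a ha2 ha3 ha4 h
    simp only [sideC, Set.mem_inter_iff, SimpleGraph.mem_neighborSet,
      g2a a ha2 ha3 ha4, g4a a ha2 ha3 ha4] at h
    exact d15 (h.1 ▸ h.2)
  have mA1n : (none : Option V) ∉ sideA G1 (some x2) (some x4) := fun h => g2n h.1
  have mB1n : (none : Option V) ∉ sideB G1 (some x2) (some x4) := fun h => g4n h.1
  have mC1n : (none : Option V) ∉ sideC G1 (some x2) (some x4) := fun h => g2n h.1
  have c1ns : ∀ w : Option V, ¬ pivotCross G1 (some x2) (some x4) none w := by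
    intro w h
    rcases h with ⟨h1, -⟩ | ⟨h1, -⟩ | ⟨h1, -⟩ | ⟨h1, -⟩ | ⟨h1, -⟩ | ⟨h1, -⟩
    · exact mA1n h1
    · exact mB1n h1
    · exact mB1n h1
    · exact mC1n h1
    · exact mA1n h1
    · exact mC1n h1
  have c1ss : ∀ a b : V, a ≠ x2 → a ≠ x3 → a ≠ x4 → b ≠ x2 → b ≠ x3 → b ≠ x4 →
      (pivotCross G1 (some x2) (some x4) (some a) (some b) ↔
        (a = x1 ∧ b = x5) ∨ (a = x5 ∧ b = x1)) := by
    intro a b ha2 ha3 ha4 hb2 hb3 hb4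
    have e1 := mA1s a ha2 ha3 ha4
    have e2 := mB1s a ha2 ha3 ha4
    have e3 := mC1s a ha2 ha3 ha4
    have f1 := mA1s b hb2 hb3 hb4
    have f2 := mB1s b hb2 hb3 hb4
    have f3 := mC1s b hb2 hb3 hb4
    unfold pivotCross
    simp only [e1, e2, iff_false_intro e3, f1, f2, iff_false_intro f3, false_and, and_false,
      or_false, false_or]
  -- the swap for the second pivot
  have swap2 : ∀ a : V, a ≠ x2 → a ≠ x4 →
      @Equiv.swap (Option V) (Classical.decEq (Option V)) (some x2) (some x4) (some a) = some a := by
    intro a ha2 ha4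
    exact @Equiv.swap_apply_of_ne_of_ne _ (Classical.decEq _) _ _ _ (by simp [ha2]) (by simp [ha4])
  have swap2n : @Equiv.swap (Option V) (Classical.decEq (Option V)) (some x2) (some x4) none = none :=
    @Equiv.swap_apply_of_ne_of_ne _ (Classical.decEq _) _ _ _ (by simp) (by simp)
  -- final adjacency characterizations of G2 on the surviving vertices
  set G2 := pivotGraph G1 (some x2) (some x4) with hG2def
  have g2ns : ∀ b : V, b ≠ x2 → b ≠ x3 → b ≠ x4 → G2.Adj none (some b) := by
    intro b hb2 hb3 hb4
    rw [hG2def, pivotGraph_adj, swap2n, swap2 _ hb2 hb4, xor_of_not_right (c1ns _)]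
    exact ⟨by simp, g1ns b hb2 hb3 hb4⟩
  have g2ss : ∀ a b : V, a ≠ x2 → a ≠ x3 → a ≠ x4 → b ≠ x2 → b ≠ x3 → b ≠ x4 →
      (G2.Adj (some a) (some b) ↔
        a ≠ b ∧ ¬ (H.Adj a b ∨ (a = x1 ∧ b = x5) ∨ (a = x5 ∧ b = x1))) := by
    intro a b ha2 ha3 ha4 hb2 hb3 hb4
    rw [hG2def, pivotGraph_adj, swap2 _ ha2 ha4, swap2 _ hb2 hb4,
      g1ss a b ha2 ha3 ha4 hb2 hb3 hb4, c1ss a b ha2 ha3 ha4 hb2 hb3 hb4]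
    have hC : ((a = x1 ∧ b = x5) ∨ (a = x5 ∧ b = x1)) → ¬ H.Adj a b := by
      rintro (⟨rfl, rfl⟩ | ⟨rfl, rfl⟩) h
      · exact h15 h
      · exact h15 h.symm
    constructor
    · rintro ⟨hne, hx⟩
      have hne' : a ≠ b := fun e => hne (by rw [e])
      refine ⟨hne', ?_⟩
      have hx' : Xor' (¬ H.Adj a b) ((a = x1 ∧ b = x5) ∨ (a = x5 ∧ b = x1)) := by
        unfold Xor' at hx
        rcases hx with ⟨⟨-, hP⟩, hnC⟩ | ⟨hCC, hnP⟩
        · exact Or.inl ⟨hP, hnC⟩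
        · exact Or.inr ⟨hCC, fun hP => hnP ⟨hne', hP⟩⟩
      exact (xor_pivot_final hC).1 hx'
    · rintro ⟨hne', hn⟩
      refine ⟨fun e => hne' (Option.some.inj e), ?_⟩
      have hx' := (xor_pivot_final hC).2 hn
      unfold Xor' at hx' ⊢
      rcases hx' with ⟨hP, hnC⟩ | ⟨hCC, hnP⟩
      · exact Or.inl ⟨⟨hne', hP⟩, hnC⟩
      · exact Or.inr ⟨hCC, fun h => hnP h.2⟩
  -- the isomorphism
  let e : {w : Option V | w ≠ some x2 ∧ w ≠ some x3 ∧ w ≠ some x4} ≃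
      Option {v : V // v ≠ x2 ∧ v ≠ x3 ∧ v ≠ x4} :=
    { toFun := fun w => match w with
        | ⟨none, _⟩ => none
        | ⟨some a, h⟩ => some ⟨a, by
            simp only [Set.mem_setOf_eq, ne_eq, Option.some.injEq] at h
            exact h⟩
      invFun := fun o => match o with
        | none => ⟨none, by simp⟩
        | some ⟨a, h⟩ => ⟨some a, by
            simp only [Set.mem_setOf_eq, ne_eq, Option.some.injEq]
            exact h⟩
      left_inv := fun w => by rcases w with ⟨_ | a, h⟩ <;> rfl
      right_inv := fun o => by rcases o with _ | ⟨a, h⟩ <;> rfl }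
  refine ⟨⟨e, ?_⟩⟩
  rintro ⟨w, hw⟩ ⟨z, hz⟩
  simp only [Set.mem_setOf_eq] at hw hz
  obtain ⟨hw2, hw3, hw4⟩ := hw
  obtain ⟨hz2, hz3, hz4⟩ := hz
  match w, z with
  | none, none =>
    simp only [SimpleGraph.comap_adj, Function.Embedding.coe_subtype]
    exact iff_of_false ((addApex _).loopless.irrefl _) (G2.loopless.irrefl _)
  | none, some b =>
    have hb2 : b ≠ x2 := fun e' => hz2 (by rw [e'])
    have hb3 : b ≠ x3 := fun e' => hz3 (by rw [e'])
    have hb4 : b ≠ x4 := fun e' => hz4 (by rw [e'])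
    simp only [SimpleGraph.comap_adj, Function.Embedding.coe_subtype]
    constructor
    · intro _
      exact g2ns b hb2 hb3 hb4
    · intro _
      exact addApex_adj_none_some _ _
  | some a, none =>
    have ha2 : a ≠ x2 := fun e' => hw2 (by rw [e'])
    have ha3 : a ≠ x3 := fun e' => hw3 (by rw [e'])
    have ha4 : a ≠ x4 := fun e' => hw4 (by rw [e'])
    simp only [SimpleGraph.comap_adj, Function.Embedding.coe_subtype]
    constructor
    · intro _
      exact (g2ns a ha2 ha3 ha4).symm
    · intro _
      exact (addApex_adj_none_some _ _).symm
  | some a, some b =>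
    have ha2 : a ≠ x2 := fun e' => hw2 (by rw [e'])
    have ha3 : a ≠ x3 := fun e' => hw3 (by rw [e'])
    have ha4 : a ≠ x4 := fun e' => hw4 (by rw [e'])
    have hb2 : b ≠ x2 := fun e' => hz2 (by rw [e'])
    have hb3 : b ≠ x3 := fun e' => hz3 (by rw [e'])
    have hb4 : b ≠ x4 := fun e' => hz4 (by rw [e'])
    simp only [SimpleGraph.comap_adj, Function.Embedding.coe_subtype]
    show (addApex _).Adj (some (⟨a, ha2, ha3, ha4⟩ : {v : V // v ≠ x2 ∧ v ≠ x3 ∧ v ≠ x4}))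
      (some (⟨b, hb2, hb3, hb4⟩ : {v : V // v ≠ x2 ∧ v ≠ x3 ∧ v ≠ x4})) ↔
      G2.Adj (some a) (some b)
    rw [addApex_adj_some_some, SimpleGraph.compl_adj, SimpleGraph.fromRel_adj,
      g2ss a b ha2 ha3 ha4 hb2 hb3 hb4]
    have hsym : H.Adj b a ↔ H.Adj a b := H.adj_comm b a
    simp only [ne_eq, Subtype.mk.injEq]
    constructor
    · rintro ⟨hab, -, hn⟩
      refine ⟨hab, fun hor => hn ⟨hab, ?_⟩⟩
      rcases hor with h | ⟨h1', h5'⟩ | ⟨h5', h1'⟩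
      · exact Or.inl (Or.inl h)
      · exact Or.inl (Or.inr ⟨h1', h5'⟩)
      · exact Or.inr (Or.inr ⟨h1', h5'⟩)
    · rintro ⟨hab, hn⟩
      refine ⟨hab, hab, fun hor => hn ?_⟩
      rcases hor.2 with (h | ⟨h1', h5'⟩) | (h | ⟨h1', h5'⟩)
      · exact Or.inl h
      · exact Or.inr (Or.inl ⟨h1', h5'⟩)
      · exact Or.inl (hsym.1 h)
      · exact Or.inr (Or.inr ⟨h5', h1'⟩)
end
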